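/- Let M = K(a,b,c,d) be a 4×4 K3 Markov matrix, and set x = a+b−c−d, y = a−b+c−d, z = a−b−c+d. If there exists a real matrix Q with K3 form such that exp(Q) = M, then x > 0, y > 0 and z > 0, and necessarily Q = S · diag(0, log x, log y, log z) · S⁻¹ (the principal logarithm of M); in particular such a real K3 logarithm is unique. -/

import Mathlib

/-- The Kimura 3ST matrix `K(a,b,c,d)`. -/
def K {α : Type*} (a b c d : α) : Matrix (Fin 4) (Fin 4) α :=
  !![a, b, c, d;
     b, a, d, c;
     c, d, a, b;
     d, c, b, a]

/-- The 4×4 Hadamard matrix `S` (over ℝ). -/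
def S : Matrix (Fin 4) (Fin 4) ℝ :=
  !![1,  1,  1,  1;
     1,  1, -1, -1;
     1, -1,  1, -1;
     1, -1, -1,  1]

/-- A Markov matrix: nonnegative entries, rows sum to 1. -/
def IsMarkov {k : ℕ} (M : Matrix (Fin k) (Fin k) ℝ) : Prop :=
  (∀ i j, 0 ≤ M i j) ∧ ∀ i, ∑ j, M i j = 1

lemma S_mul_smul_S : S * ((1/4 : ℝ) • S) = 1 := by
  ext i j
  fin_cases i <;> fin_cases j <;>
    norm_num [S, Matrix.mul_apply, Fin.sum_univ_four, Matrix.one_apply,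
      Matrix.cons_val_two, Matrix.cons_val_three, Matrix.vecHead, Matrix.vecTail, Fin.ext_iff]

lemma S_inv_eq : S⁻¹ = (1/4 : ℝ) • S :=
  Matrix.inv_eq_right_inv S_mul_smul_S

lemma S_isUnit : IsUnit S :=
  Matrix.isUnit_iff_isUnit_det S |>.mpr <| by
    have hdet : S.det * ((1/4 : ℝ) • S).det = 1 := by
      rw [← Matrix.det_mul, S_mul_smul_S, Matrix.det_one]
    exact IsUnit.of_mul_eq_one _ hdet

lemma Sinv_mul_S : S⁻¹ * S = 1 := by
  rw [S_inv_eq, Matrix.smul_mul, ← Matrix.mul_smul, S_mul_smul_S]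

lemma diag_explicit (p q r s : ℝ) : Matrix.diagonal ![p, q, r, s] =
    !![p,0,0,0; 0,q,0,0; 0,0,r,0; 0,0,0,s] := by
  ext i j
  fin_cases i <;> fin_cases j <;>
    simp [Matrix.diagonal_apply, Matrix.vecHead, Matrix.vecTail]

lemma S_mul_diag (p q r s : ℝ) :
    S * !![p,0,0,0; 0,q,0,0; 0,0,r,0; 0,0,0,s] =
    !![p,q,r,s; p,q,-r,-s; p,-q,r,-s; p,-q,-r,s] := by
  ext i j
  fin_cases i <;> fin_cases j <;>
    simp [S, Matrix.mul_apply, Fin.sum_univ_four, Matrix.vecHead, Matrix.vecTail]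

lemma Sdiag_mul_S (p q r s : ℝ) :
    !![p,q,r,s; p,q,-r,-s; p,-q,r,-s; p,-q,-r,s] * S =
    !![p+q+r+s, p+q-r-s, p-q+r-s, p-q-r+s;
       p+q-r-s, p+q+r+s, p-q-r+s, p-q+r-s;
       p-q+r-s, p-q-r+s, p+q+r+s, p+q-r-s;
       p-q-r+s, p-q+r-s, p+q-r-s, p+q+r+s] := by
  ext i j
  fin_cases i <;> fin_cases j <;>
    simp [S, Matrix.mul_apply, Fin.sum_univ_four, Matrix.vecHead, Matrix.vecTail] <;> ring

lemma conjK (p q r s : ℝ) :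
    S * Matrix.diagonal ![p+q+r+s, p+q-r-s, p-q+r-s, p-q-r+s] * S⁻¹ = K p q r s := by
  rw [S_inv_eq, Matrix.mul_smul, diag_explicit, S_mul_diag, Sdiag_mul_S]
  ext i j
  fin_cases i <;> fin_cases j <;>
    simp [K, Matrix.smul_apply, Matrix.vecHead, Matrix.vecTail, smul_eq_mul] <;> ring

theorem stmt_5 (a b c d : ℝ) (hM : IsMarkov (K a b c d))
    (Q : Matrix (Fin 4) (Fin 4) ℝ)
    (hK3 : ∃ α β γ δ : ℝ, Q = K α β γ δ)
    (hexp : NormedSpace.exp Q = K a b c d) :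
    0 < a + b - c - d ∧ 0 < a - b + c - d ∧ 0 < a - b - c + d ∧
    Q = S * Matrix.diagonal
        ![0, Real.log (a + b - c - d), Real.log (a - b + c - d), Real.log (a - b - c + d)]
      * S⁻¹ := by
  obtain ⟨α, β, γ, δ, rfl⟩ := hK3
  have hsum : a + b + c + d = 1 := by
    have := hM.2 0
    simp [K, Fin.sum_univ_four, Matrix.vecHead, Matrix.vecTail] at this
    linarith
  have hQ : K α β γ δ =
      S * Matrix.diagonal ![α+β+γ+δ, α+β-γ-δ, α-β+γ-δ, α-β-γ+δ] * S⁻¹ := (conjK α β γ δ).symm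
  have hexp' : S * Matrix.diagonal
      (NormedSpace.exp ![α+β+γ+δ, α+β-γ-δ, α-β+γ-δ, α-β-γ+δ]) * S⁻¹ =
      S * Matrix.diagonal ![a+b+c+d, a+b-c-d, a-b+c-d, a-b-c+d] * S⁻¹ := by
    rw [← Matrix.exp_diagonal, ← Matrix.exp_conj S _ S_isUnit, ← hQ, hexp]
    exact (conjK a b c d).symm
  have hdiag : Matrix.diagonal
      (NormedSpace.exp ![α+β+γ+δ, α+β-γ-δ, α-β+γ-δ, α-β-γ+δ]) =
      Matrix.diagonal ![a+b+c+d, a+b-c-d, a-b+c-d, a-b-c+d] := by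
    have cancel : ∀ D : Matrix (Fin 4) (Fin 4) ℝ, S⁻¹ * (S * D * S⁻¹) * S = D := by
      intro D
      rw [Matrix.mul_assoc S D, ← Matrix.mul_assoc S⁻¹ S, Sinv_mul_S, Matrix.one_mul,
        Matrix.mul_assoc, Sinv_mul_S, Matrix.mul_one]
    have h := congrArg (fun X => S⁻¹ * X * S) hexp'
    rw [cancel, cancel] at h
    exact h
  have key : ∀ i, Real.exp (![α+β+γ+δ, α+β-γ-δ, α-β+γ-δ, α-β-γ+δ] i) =
      ![a+b+c+d, a+b-c-d, a-b+c-d, a-b-c+d] i := by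
    intro i
    have h := congrFun (congrFun hdiag i) i
    rw [Matrix.diagonal_apply_eq, Matrix.diagonal_apply_eq, Pi.coe_exp] at h
    rw [Real.exp_eq_exp_ℝ]
    exact h
  have h0 := key 0
  have h1 := key 1
  have h2 := key 2
  have h3 := key 3
  simp [Matrix.vecHead, Matrix.vecTail] at h0 h1 h2 h3
  refine ⟨h1 ▸ Real.exp_pos _, h2 ▸ Real.exp_pos _, h3 ▸ Real.exp_pos _, ?_⟩
  have e1 : Real.log (a+b-c-d) = α+β-γ-δ := by rw [← h1, Real.log_exp]
  have e2 : Real.log (a-b+c-d) = α-β+γ-δ := by rw [← h2, Real.log_exp]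
  have e3 : Real.log (a-b-c+d) = α-β-γ+δ := by rw [← h3, Real.log_exp]
  have e0 : α+β+γ+δ = 0 := by
    have h : Real.log (a+b+c+d) = α+β+γ+δ := by rw [← h0, Real.log_exp]
    rw [hsum, Real.log_one] at h; linarith
  rw [hQ, e1, e2, e3, ← e0]
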